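/- Fix integers k, k' ≥ 0, a complex number θ, and an integer t ≥ 1. Define h_t(x_1,…,x_k, y_1,…,y_{k'}) := Σ_{i=1}^{k} B_t(x_i + 1/2) + (−θ)^{t−1} Σ_{j=1}^{k'} B_t(y_j + 1/2), where B_t is the Bernoulli polynomial of degree t. Then for every pair of indices (i,j) and every point (x,y) satisfying x_i + θ·y_j = 0, one has h_t(x + (1/2)e_i, y − (1/2)e_j) = h_t(x − (1/2)e_i, y + (1/2)e_j), where e_i, e_j denote standard basis vectors in the x- and y-variables respectively. -/

import Mathlib

open Finset


/-- The Bernoulli polynomial of degree `t`. -/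
noncomputable def bernoulliPoly (t : ℕ) (z : ℂ) : ℂ :=
  ∑ i ∈ Finset.range (t + 1), (1 / ((i : ℂ) + 1)) *
    ∑ j ∈ Finset.range (i + 1), (-1) ^ j * (Nat.choose i j : ℂ) * (z + (j : ℂ)) ^ t

/-- `h_t(x,y) = ∑_i B_t(x_i + 1/2) + (-θ)^{t-1} ∑_j B_t(y_j + 1/2)`. -/
noncomputable def hPoly (k k' t : ℕ) (θ : ℂ) (x : Fin k → ℂ) (y : Fin k' → ℂ) : ℂ :=
  (∑ i, bernoulliPoly t (x i + 1 / 2)) + (-θ) ^ (t - 1) * ∑ j, bernoulliPoly t (y j + 1 / 2)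

noncomputable def TT (n m : ℕ) : ℂ :=
  ∑ j ∈ range (m+1), (-1:ℂ)^j * (Nat.choose m j : ℂ) * (j:ℂ)^n

lemma TT_zero (m : ℕ) : TT 0 (m+1) = 0 := by
  have h := @Int.alternating_sum_range_choose (m+1)
  rw [if_neg (Nat.succ_ne_zero m)] at h
  have := congrArg (fun z : ℤ => (z : ℂ)) h
  push_cast at this
  simpa [TT] using this

lemma TT_rec (n m : ℕ) :
    TT (n+1) (m+1) = -((m:ℂ)+1) * ∑ s ∈ range (n+1), (Nat.choose n s : ℂ) * TT s m := by
  rw [TT, Finset.sum_range_succ']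
  simp only [Nat.cast_zero, zero_pow (Nat.succ_ne_zero n), mul_zero, add_zero]
  have key : ∀ l ∈ range (m+1),
      (-1:ℂ)^(l+1) * (Nat.choose (m+1) (l+1) : ℂ) * (((l:ℕ)+1:ℕ):ℂ)^(n+1)
      = -((m:ℂ)+1) * ((-1:ℂ)^l * (Nat.choose m l : ℂ) * ((l:ℂ)+1)^n) := by
    intro l _
    have h : ((m+1) * Nat.choose m l : ℕ) = (Nat.choose (m+1) (l+1) * (l+1) : ℕ) := by
      simpa using Nat.add_one_mul_choose_eq m l
    have h' : ((m:ℂ)+1) * (Nat.choose m l : ℂ) = (Nat.choose (m+1) (l+1) : ℂ) * ((l:ℂ)+1) := by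
      exact_mod_cast congrArg (fun z : ℕ => (z : ℂ)) h
    push_cast
    rw [pow_succ (-1:ℂ), pow_succ ((l:ℂ)+1)]
    linear_combination ((-1:ℂ)^l * ((l:ℂ)+1)^n) * h'
  rw [Finset.sum_congr rfl key, ← Finset.mul_sum]
  congr 1
  -- now: ∑ l in range (m+1), (-1)^l * C(m,l) * ((l:ℂ)+1)^n = ∑ s in range (n+1), C(n,s) * TT s m
  have expand : ∀ l : ℕ, ((l:ℂ)+1)^n = ∑ s ∈ range (n+1), (Nat.choose n s : ℂ) * (l:ℂ)^s := by
    intro l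
    rw [add_pow]
    exact Finset.sum_congr rfl fun s _ => by ring
  calc ∑ l ∈ range (m+1), (-1:ℂ)^l * (Nat.choose m l : ℂ) * ((l:ℂ)+1)^n
      = ∑ l ∈ range (m+1), ∑ s ∈ range (n+1),
          (Nat.choose n s : ℂ) * ((-1:ℂ)^l * (Nat.choose m l : ℂ) * (l:ℂ)^s) := by
        refine Finset.sum_congr rfl fun l _ => ?_
        rw [expand l, Finset.mul_sum]
        exact Finset.sum_congr rfl fun s _ => by ring
    _ = ∑ s ∈ range (n+1), (Nat.choose n s : ℂ) * TT s m := by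
        rw [Finset.sum_comm]
        exact Finset.sum_congr rfl fun s _ => by rw [TT, Finset.mul_sum]

lemma TT_vanish : ∀ m n : ℕ, n < m → TT n m = 0 := by
  intro m
  induction m with
  | zero => intro n hn; omega
  | succ m ih =>
    intro n hn
    cases n with
    | zero => exact TT_zero m
    | succ s =>
      rw [TT_rec]
      have : ∑ u ∈ range (s+1), (Nat.choose s u : ℂ) * TT u m = 0 := by
        refine Finset.sum_eq_zero fun u hu => ?_
        rw [ih u (by simp at hu; omega), mul_zero]
      rw [this, mul_zero]

noncomputable def VV (n m : ℕ) : ℂ :=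
  ∑ j ∈ range (m+1), (-1:ℂ)^j * (Nat.choose m j : ℂ) * ((j:ℂ)+1)^n

lemma VV_eq (n m : ℕ) : VV n m = ∑ s ∈ range (n+1), (Nat.choose n s : ℂ) * TT s m := by
  have expand : ∀ l : ℕ, ((l:ℂ)+1)^n = ∑ s ∈ range (n+1), (Nat.choose n s : ℂ) * (l:ℂ)^s := by
    intro l
    rw [add_pow]
    exact Finset.sum_congr rfl fun s _ => by ring
  calc VV n m = ∑ j ∈ range (m+1), ∑ s ∈ range (n+1),
      (Nat.choose n s : ℂ) * ((-1:ℂ)^j * (Nat.choose m j : ℂ) * (j:ℂ)^s) := by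
        refine Finset.sum_congr rfl fun j _ => ?_
        rw [expand j, Finset.mul_sum]
        exact Finset.sum_congr rfl fun s _ => by ring
    _ = ∑ s ∈ range (n+1), (Nat.choose n s : ℂ) * TT s m := by
        rw [Finset.sum_comm]
        exact Finset.sum_congr rfl fun s _ => by rw [TT, Finset.mul_sum]

lemma VV_vanish (n m : ℕ) (h : n < m) : VV n m = 0 := by
  rw [VV_eq]
  refine Finset.sum_eq_zero fun s hs => ?_
  rw [TT_vanish m s (by simp at hs; omega), mul_zero]

-- triangle swap
lemma tri_swap (n : ℕ) (f : ℕ → ℕ → ℂ) :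
    ∑ m ∈ range (n+1), ∑ j ∈ range (m+1), f m j
      = ∑ j ∈ range (n+1), ∑ m ∈ Icc j n, f m j := by
  induction n with
  | zero => simp
  | succ n ih =>
    rw [Finset.sum_range_succ, ih]
    rw [Finset.sum_range_succ (fun j => ∑ m ∈ Icc j (n+1), f m j)]
    have hIcc : ∀ j ∈ range (n+1), ∑ m ∈ Icc j (n+1), f m j
        = (∑ m ∈ Icc j n, f m j) + f (n+1) j := by
      intro j hj
      simp at hj
      rw [Finset.sum_Icc_succ_top (by omega)]
    rw [Finset.sum_congr rfl hIcc, Finset.sum_add_distrib]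
    have : ∑ m ∈ Icc (n+1) (n+1), f m (n+1) = f (n+1) (n+1) := by simp
    rw [this, Finset.sum_range_succ (fun j => f (n+1) j)]
    ring

lemma sum_VV (n : ℕ) (hn : 1 ≤ n) : ∑ m ∈ range (n+1), VV n m = 0 := by
  have swap := tri_swap n (fun m j => (-1:ℂ)^j * (Nat.choose m j : ℂ) * ((j:ℂ)+1)^n)
  have hVV : ∑ m ∈ range (n+1), VV n m
      = ∑ j ∈ range (n+1), (-1:ℂ)^j * (Nat.choose (n+1) (j+1) : ℂ) * ((j:ℂ)+1)^n := by
    rw [show (∑ m ∈ range (n+1), VV n m) = ∑ m ∈ range (n+1), ∑ j ∈ range (m+1),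
        (-1:ℂ)^j * (Nat.choose m j : ℂ) * ((j:ℂ)+1)^n from rfl, swap]
    refine Finset.sum_congr rfl fun j hj => ?_
    rw [← Finset.sum_mul, ← Finset.mul_sum]
    congr 2
    rw [← Nat.cast_sum, Nat.sum_Icc_choose]
  -- relate to TT n (n+1)
  have hTT : TT n (n+1) = (0:ℂ)^n - ∑ j ∈ range (n+1),
      (-1:ℂ)^j * (Nat.choose (n+1) (j+1) : ℂ) * ((j:ℂ)+1)^n := by
    rw [TT, Finset.sum_range_succ']
    push_cast
    rw [show ((-1:ℂ)^0 * (Nat.choose (n+1) 0 : ℂ) * (0:ℂ)^n) = (0:ℂ)^n by simp]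
    have neg : ∀ x ∈ range (n+1), (-1:ℂ)^(x+1) * (Nat.choose (n+1) (x+1) : ℂ) * ((x:ℂ)+1)^n
        = -((-1:ℂ)^x * (Nat.choose (n+1) (x+1) : ℂ) * ((x:ℂ)+1)^n) := fun x _ => by ring
    rw [Finset.sum_congr rfl neg, Finset.sum_neg_distrib]
    ring
  have h1 : TT n (n+1) = 0 := TT_vanish (n+1) n (by omega)
  have h2 : (0:ℂ)^n = 0 := zero_pow (by omega)
  rw [hVV]
  have := hTT
  rw [h1, h2] at this
  linear_combination this

noncomputable def HH (n M : ℕ) : ℂ := ∑ m ∈ range M, TT n (m+1) / ((m:ℂ)+1)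

lemma HH_zero (M : ℕ) : HH 0 M = 0 :=
  Finset.sum_eq_zero fun m _ => by rw [TT_zero, zero_div]

lemma TT_one_one : TT 1 1 = -1 := by
  simp [TT, Finset.sum_range_succ]

lemma HH_one (M : ℕ) (hM : 1 ≤ M) : HH 1 M = -1 := by
  rw [HH, Finset.sum_eq_single_of_mem 0 (by simp; omega)]
  · rw [TT_one_one]; norm_num
  · intro m _ hm
    rw [TT_vanish (m+1) 1 (by omega), zero_div]

lemma HH_big (n M : ℕ) (hn : 1 ≤ n) (hM : n+1 ≤ M) : HH (n+1) M = 0 := by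
  have step : ∀ m ∈ range M, TT (n+1) (m+1) / ((m:ℂ)+1) = -VV n m := by
    intro m _
    rw [TT_rec, VV_eq]
    have hne : ((m:ℂ)+1) ≠ 0 := Nat.cast_add_one_ne_zero m
    field_simp
  rw [HH, Finset.sum_congr rfl step, Finset.sum_neg_distrib, neg_eq_zero]
  have trunc : ∑ m ∈ range M, VV n m = ∑ m ∈ range (n+1), VV n m := by
    symm
    apply Finset.sum_subset (Finset.range_subset_range.2 hM)
    intro m _ hm
    exact VV_vanish n m (by simp at hm ⊢; omega)
  rw [trunc, sum_VV n hn]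

noncomputable def gg (t m : ℕ) (z : ℂ) : ℂ :=
  ∑ j ∈ range (m+1), (-1:ℂ)^j * (Nat.choose m j : ℂ) * (z + (j:ℂ))^t

lemma alt_pascal (f : ℕ → ℂ) (m : ℕ) :
    ∑ j ∈ range (m+2), (-1:ℂ)^j * ((m+1).choose j : ℂ) * f j
    = ∑ j ∈ range (m+1), (-1:ℂ)^j * (m.choose j : ℂ) * f j
      - ∑ j ∈ range (m+1), (-1:ℂ)^j * (m.choose j : ℂ) * f (j+1) := by
  rw [Finset.sum_range_succ']
  have split : ∀ l ∈ range (m+1), (-1:ℂ)^(l+1) * ((m+1).choose (l+1) : ℂ) * f (l+1)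
      = (-1:ℂ)^(l+1) * (m.choose (l+1) : ℂ) * f (l+1)
        - (-1:ℂ)^l * (m.choose l : ℂ) * f (l+1) := by
    intro l _
    have h : ((m+1).choose (l+1) : ℂ) = (m.choose l : ℂ) + (m.choose (l+1) : ℂ) := by
      exact_mod_cast congrArg (Nat.cast : ℕ → ℂ) (Nat.choose_succ_succ m l)
    rw [h]; ring
  rw [Finset.sum_congr rfl split, Finset.sum_sub_distrib]
  have h1 : (∑ l ∈ range (m+1), (-1:ℂ)^(l+1) * (m.choose (l+1) : ℂ) * f (l+1))
      + (-1:ℂ)^0 * ((m+1).choose 0 : ℂ) * f 0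
      = ∑ j ∈ range (m+1), (-1:ℂ)^j * (m.choose j : ℂ) * f j := by
    rw [Finset.sum_range_succ' (fun j => (-1:ℂ)^j * (m.choose j:ℂ) * f j) m,
      Finset.sum_range_succ (fun l => (-1:ℂ)^(l+1) * (m.choose (l+1):ℂ) * f (l+1)) m]
    simp [Nat.choose_succ_self]
  linear_combination h1

lemma gg_succ (t m : ℕ) (z : ℂ) : gg t (m+1) z = gg t m z - gg t m (z+1) := by
  have h := alt_pascal (fun j => (z + (j:ℂ))^t) m
  rw [gg, gg, gg]
  rw [h]
  congr 1
  refine Finset.sum_congr rfl fun j _ => ?_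
  push_cast
  ring_nf

lemma gg_expand (t m : ℕ) (z : ℂ) :
    gg t m z = ∑ r ∈ range (t+1), (t.choose r : ℂ) * z^r * TT (t-r) m := by
  have h1 : ∀ j ∈ range (m+1), (-1:ℂ)^j * (Nat.choose m j : ℂ) * (z+(j:ℂ))^t
      = ∑ r ∈ range (t+1), (t.choose r:ℂ) * z^r * ((-1:ℂ)^j * (Nat.choose m j:ℂ) * (j:ℂ)^(t-r)) := by
    intro j _
    rw [add_pow, Finset.mul_sum]
    exact Finset.sum_congr rfl fun r _ => by ring
  rw [gg, Finset.sum_congr rfl h1, Finset.sum_comm]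
  exact Finset.sum_congr rfl fun r _ => by rw [TT, Finset.mul_sum]

lemma bernoulliPoly_diff (t : ℕ) (ht : 1 ≤ t) (z : ℂ) :
    bernoulliPoly t (z+1) - bernoulliPoly t z = (t:ℂ) * z^(t-1) := by
  have step1 : bernoulliPoly t (z+1) - bernoulliPoly t z
      = ∑ i ∈ range (t+1), (1 / ((i:ℂ)+1)) * (-(gg t (i+1) z)) := by
    rw [bernoulliPoly, bernoulliPoly, ← Finset.sum_sub_distrib]
    refine Finset.sum_congr rfl fun i _ => ?_
    rw [← mul_sub]
    congr 1
    rw [show (∑ j ∈ range (i+1), (-1:ℂ)^j * (Nat.choose i j : ℂ) * (z+1+(j:ℂ))^t) = gg t i (z+1) from rfl,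
        show (∑ j ∈ range (i+1), (-1:ℂ)^j * (Nat.choose i j : ℂ) * (z+(j:ℂ))^t) = gg t i z from rfl,
        gg_succ]
    ring
  rw [step1]
  have step2 : ∀ i ∈ range (t+1), (1 / ((i:ℂ)+1)) * (-(gg t (i+1) z))
      = ∑ r ∈ range (t+1), (t.choose r : ℂ) * z^r * (-(TT (t-r) (i+1) / ((i:ℂ)+1))) := by
    intro i _
    rw [gg_expand, ← Finset.sum_neg_distrib, Finset.mul_sum]
    exact Finset.sum_congr rfl fun r _ => by ring
  rw [Finset.sum_congr rfl step2, Finset.sum_comm]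
  have step3 : ∀ r ∈ range (t+1), ∑ i ∈ range (t+1),
      (t.choose r : ℂ) * z^r * (-(TT (t-r) (i+1) / ((i:ℂ)+1)))
      = (t.choose r : ℂ) * z^r * (-(HH (t-r) (t+1))) := by
    intro r _
    rw [HH, ← Finset.sum_neg_distrib, Finset.mul_sum]
  rw [Finset.sum_congr rfl step3]
  rw [Finset.sum_eq_single_of_mem (t-1) (by simp)]
  · have h1 : t - (t-1) = 1 := by omega
    have h2 : (t.choose (t-1) : ℂ) = (t : ℂ) := by
      rw [Nat.choose_symm (by omega : 1 ≤ t), Nat.choose_one_right]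
    rw [h1, HH_one (t+1) (by omega), h2]
    ring
  · intro r hr hrne
    rcases Nat.lt_or_ge r t with h | h
    · have : t - r = (t - r - 1) + 1 := by omega
      rw [this, HH_big (t-r-1) (t+1) (by omega) (by omega)]
      ring
    · have hrt : r = t := by simp at hr; omega
      rw [hrt, Nat.sub_self, HH_zero]
      ring

lemma sum_update_bp {n : ℕ} (t : ℕ) (w : Fin n → ℂ) (i : Fin n) (v : ℂ) :
    ∑ l, bernoulliPoly t (Function.update w i v l + 1/2)
      = bernoulliPoly t (v + 1/2) + ∑ l ∈ Finset.univ \ {i}, bernoulliPoly t (w l + 1/2) := by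
  classical
  have h : ∀ l, bernoulliPoly t (Function.update w i v l + 1/2)
      = Function.update (fun l => bernoulliPoly t (w l + 1/2)) i (bernoulliPoly t (v + 1/2)) l := by
    intro l
    rcases eq_or_ne l i with rfl | hl
    · simp
    · simp [Function.update_of_ne hl]
  rw [Finset.sum_congr rfl (fun l _ => h l)]
  exact Finset.sum_update_of_mem (Finset.mem_univ i) _ _


/-- Quasi-invariance of `h_t` on the hyperplanes `x_i + θ y_j = 0`. -/
theorem hPoly_quasi_invariance (k k' : ℕ) (θ : ℂ) (t : ℕ) (ht : 1 ≤ t)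
    (i : Fin k) (j : Fin k') (x : Fin k → ℂ) (y : Fin k' → ℂ)
    (h : x i + θ * y j = 0) :
    hPoly k k' t θ (Function.update x i (x i + 1 / 2)) (Function.update y j (y j - 1 / 2)) =
      hPoly k k' t θ (Function.update x i (x i - 1 / 2)) (Function.update y j (y j + 1 / 2)) := by
  rw [hPoly, hPoly, sum_update_bp, sum_update_bp, sum_update_bp, sum_update_bp]
  rw [show x i + 1/2 + 1/2 = x i + 1 from by ring, show y j - 1/2 + 1/2 = y j from by ring,
      show x i - 1/2 + 1/2 = x i from by ring, show y j + 1/2 + 1/2 = y j + 1 from by ring]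
  have d1 := bernoulliPoly_diff t ht (x i)
  have d2 := bernoulliPoly_diff t ht (y j)
  have hx : x i = (-θ) * y j := by linear_combination h
  have hp : (x i)^(t-1) = (-θ)^(t-1) * (y j)^(t-1) := by rw [hx, mul_pow]
  linear_combination d1 - (-θ)^(t-1) * d2 + (t:ℂ) * hp
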